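/- For x ∈ G conjugating a central homogeneous element: if 0 ≠ r_g u_g ∈ Z(A), so that σ_x(r_g) = r_g·f(g,x) for all x ∈ G where f(g,x) = α(g,x)/α(x,g) ∈ K (K the fraction field of R, G Abelian), then f(g,·) is a crossed homomorphism: f(g,xy) = f(g,x)·σ_x(f(g,y)) for all x,y ∈ G. -/
import Mathlib

/-- Let `K` be the fraction field of a commutative domain `R`, `G` a finite Abelian
group acting on `K` by automorphisms `σ` (extended from `R`), and
`α : G × G → K \ {0}` the 2-cocycle.  Set `f(g,x) = α(g,x)/α(x,g)`.  If
`0 ≠ r_g` satisfies `σ_x(r_g) = r_g · f(g,x)` for all `x ∈ G` (i.e. `r_g u_g` is a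
nonzero central homogeneous element), then `f(g,·)` is a crossed homomorphism:
`f(g,xy) = f(g,x) · σ_x(f(g,y))` for all `x, y ∈ G`. -/
theorem crossed_homomorphism {G K : Type*} [CommGroup G] [Finite G] [Field K]
    (σ : G →* RingAut K) (α : G → G → K) (hα : ∀ g h : G, α g h ≠ 0)
    (g : G) (r : K) (hr : r ≠ 0)
    (h : ∀ x : G, σ x r = r * (α g x / α x g)) :
    ∀ x y : G, α g (x * y) / α (x * y) g =
      (α g x / α x g) * σ x (α g y / α y g) := by
  intro x y
  have key : r * (α g (x * y) / α (x * y) g)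
      = r * ((α g x / α x g) * σ x (α g y / α y g)) := by
    calc r * (α g (x * y) / α (x * y) g) = σ (x * y) r := (h _).symm
      _ = σ x (σ y r) := by rw [map_mul]; rfl
      _ = σ x (r * (α g y / α y g)) := by rw [h]
      _ = σ x r * σ x (α g y / α y g) := by rw [map_mul]
      _ = r * ((α g x / α x g) * σ x (α g y / α y g)) := by rw [h]; ring
  exact mul_left_cancel₀ hr key
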